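/- Let a, c ∈ (0,∞)^d with ∑_{i=1}^d a_i²/c_i > 1, and let λ be the unique positive eigenvalue of D = a aᵀ − diag(c). Then for any x ∈ (0,∞)^d with ∑_j x_j = 1 and such that T := a_j²/x_j − c_j is the same for all j, one has T = λ. In particular the common value T is uniquely determined. -/

import Mathlib

open Matrix Finset

theorem equal_precision_value_is_eigenvalue {d : ℕ} (a c : Fin d → ℝ) (lam : ℝ)
    (ha : ∀ i, 0 < a i) (hc : ∀ i, 0 < c i)
    (hsum : 1 < ∑ i, a i ^ 2 / c i)
    (hlam : 0 < lam)
    (heig : ∃ v : Fin d → ℝ, v ≠ 0 ∧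
      (Matrix.vecMulVec a a - Matrix.diagonal c).mulVec v = lam • v) :
    ∀ (x : Fin d → ℝ) (T : ℝ), (∀ j, 0 < x j) → ∑ j, x j = 1 →
      (∀ j, a j ^ 2 / x j - c j = T) → T = lam := by
  intro x T hx hxsum hT
  obtain ⟨v, hv, hev⟩ := heig
  have hd : Nonempty (Fin d) := by
    by_contra h
    rw [not_nonempty_iff] at h
    rw [Finset.univ_eq_empty, Finset.sum_empty] at hsum
    linarith
  set s := ∑ i, a i * v i with hs
  have hlc : ∀ j, 0 < lam + c j := fun j => by have := hc j; linarith
  have key : ∀ j, a j * s = (lam + c j) * v j := by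
    intro j
    have h := congrFun hev j
    rw [Matrix.sub_mulVec] at h
    simp only [Pi.sub_apply, Matrix.mulVec_diagonal, Pi.smul_apply, smul_eq_mul] at h
    simp only [Matrix.mulVec, dotProduct, Matrix.vecMulVec_apply] at h
    have h2 : ∑ i, a j * a i * v i = a j * s := by
      rw [hs, Finset.mul_sum]; congr 1; ext i; ring
    rw [h2] at h
    linarith
  have hvj : ∀ j, v j = a j * s / (lam + c j) := by
    intro j
    rw [eq_div_iff (hlc j).ne']
    rw [key j]; ring
  have hsne : s ≠ 0 := by
    intro h0
    apply hv
    funext j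
    have := key j
    rw [h0, mul_zero] at this
    have := (mul_eq_zero.mp this.symm).resolve_left (ne_of_gt (hlc j))
    simpa using this
  have hlameq : ∑ j, a j ^ 2 / (lam + c j) = 1 := by
    have : s = ∑ j, a j ^ 2 / (lam + c j) * s := by
      conv_lhs => rw [hs]
      congr 1; ext j
      rw [hvj j]; field_simp
    rw [← Finset.sum_mul] at this
    have := mul_right_cancel₀ hsne (by linarith : (∑ j, a j ^ 2 / (lam + c j)) * s = 1 * s)
    linarith
  have hTc : ∀ j, 0 < T + c j := by
    intro j
    have := hT j
    have hpos : 0 < a j ^ 2 / x j := div_pos (pow_pos (ha j) 2) (hx j)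
    linarith
  have hTeq : ∑ j, a j ^ 2 / (T + c j) = 1 := by
    rw [← hxsum]
    congr 1; ext j
    have h1 : a j ^ 2 / x j = T + c j := by linarith [hT j]
    rw [div_eq_iff (hx j).ne'] at h1
    rw [div_eq_iff (hTc j).ne', h1]; ring
  rcases lt_trichotomy T lam with h | h | h
  · exfalso
    have : ∑ j, a j ^ 2 / (lam + c j) < ∑ j, a j ^ 2 / (T + c j) := by
      apply Finset.sum_lt_sum_of_nonempty (Finset.univ_nonempty)
      intro j _
      exact div_lt_div_of_pos_left (pow_pos (ha j) 2) (hTc j) (by linarith)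
    rw [hlameq, hTeq] at this
    exact lt_irrefl 1 this
  · exact h
  · exfalso
    have : ∑ j, a j ^ 2 / (T + c j) < ∑ j, a j ^ 2 / (lam + c j) := by
      apply Finset.sum_lt_sum_of_nonempty (Finset.univ_nonempty)
      intro j _
      exact div_lt_div_of_pos_left (pow_pos (ha j) 2) (hlc j) (by linarith)
    rw [hlameq, hTeq] at this
    exact lt_irrefl 1 this
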